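/- Let X be a Banach space and S : c₀ → X a bounded linear operator such that inf_n ‖S(e_n)‖ > 0, where (e_n) is the standard unit vector basis of c₀. If X contains no isomorphic copy of c₀, this is impossible; equivalently, there exists an infinite subset N ⊆ ℕ such that the restriction of S to the subspace of sequences supported on N is an isomorphism onto its image. -/

import Mathlib

open Topology ZeroAtInfty

lemma c0_apply_le (f : C₀(ℕ, ℝ)) (m : ℕ) : |f m| ≤ ‖f‖ := by
  rw [← ZeroAtInftyContinuousMap.norm_toBCF_eq_norm]
  exact f.toBCF.norm_coe_le_norm m

lemma c0_norm_le (f : C₀(ℕ, ℝ)) {C : ℝ} (hC : 0 ≤ C) (h : ∀ m, |f m| ≤ C) : ‖f‖ ≤ C := by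
  rw [← ZeroAtInftyContinuousMap.norm_toBCF_eq_norm]
  exact BoundedContinuousFunction.norm_le hC |>.mpr h

def evalHom (k : ℕ) : C₀(ℕ, ℝ) →+ ℝ :=
  AddMonoidHom.mk' (fun f => f k) (by intro f g; simp)

lemma c0_sum_apply (F : Finset ℕ) (f : ℕ → C₀(ℕ, ℝ)) (k : ℕ) :
    (∑ m ∈ F, f m) k = ∑ m ∈ F, f m k :=
  map_sum (evalHom k) f F

lemma c0_tail (f : C₀(ℕ, ℝ)) {η : ℝ} (hη : 0 < η) : ∃ N₀, ∀ k ≥ N₀, |f k| < η := by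
  have h := zero_at_infty f
  rw [cocompact_eq_atTop] at h
  have := NormedAddCommGroup.tendsto_atTop.mp h η hη
  simpa [Real.norm_eq_abs] using this

/-- value of a finite combination of unit vectors -/
lemma comb_apply (e : ℕ → C₀(ℕ, ℝ)) (he : ∀ n m : ℕ, e n m = if m = n then 1 else 0)
    (F : Finset ℕ) (a : ℕ → ℝ) (k : ℕ) :
    (∑ m ∈ F, a m • e m) k = if k ∈ F then a k else 0 := by
  rw [c0_sum_apply]
  have : ∀ m ∈ F, (a m • e m) k = if m = k then a m else 0 := by
    intro m _
    rw [ZeroAtInftyContinuousMap.coe_smul]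
    simp only [Pi.smul_apply, smul_eq_mul, he m k]
    by_cases h : m = k
    · subst h; simp
    · rw [if_neg h, if_neg (fun hh => h hh.symm), mul_zero]
  rw [Finset.sum_congr rfl this, Finset.sum_ite_eq']

/-- The weak unconditional Cauchy property of `∑ S eₙ`. -/
lemma wuc {X : Type*} [NormedAddCommGroup X] [NormedSpace ℝ X]
    (S : C₀(ℕ, ℝ) →L[ℝ] X)
    (e : ℕ → C₀(ℕ, ℝ)) (he : ∀ n m : ℕ, e n m = if m = n then 1 else 0)
    (φ : X →L[ℝ] ℝ) (hφ : ‖φ‖ ≤ 1) (F : Finset ℕ) :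
    ∑ m ∈ F, |φ (S (e m))| ≤ ‖S‖ := by
  classical
  set σ : ℕ → ℝ := fun m => if 0 ≤ φ (S (e m)) then 1 else -1 with hσ
  set u : C₀(ℕ, ℝ) := ∑ m ∈ F, σ m • e m with hu
  have hun : ‖u‖ ≤ 1 := by
    apply c0_norm_le _ zero_le_one
    intro k
    rw [hu, comb_apply e he]
    by_cases h : k ∈ F
    · simp only [h, if_pos]
      by_cases h2 : 0 ≤ φ (S (e k)) <;> simp [σ, h2]
    · simp [h]
  have key : ∑ m ∈ F, |φ (S (e m))| = φ (S u) := by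
    rw [hu, map_sum, map_sum]
    apply Finset.sum_congr rfl
    intro m _
    rw [map_smul, map_smul]
    simp only [smul_eq_mul]
    by_cases h2 : 0 ≤ φ (S (e m))
    · simp [σ, h2, abs_of_nonneg h2]
    · push_neg at h2
      simp [σ, not_le.mpr h2, abs_of_neg h2]
  rw [key]
  calc φ (S u) ≤ |φ (S u)| := le_abs_self _
    _ ≤ ‖φ‖ * ‖S u‖ := by
        simpa [Real.norm_eq_abs] using φ.le_opNorm (S u)
    _ ≤ 1 * (‖S‖ * ‖u‖) := by
        apply mul_le_mul hφ (S.le_opNorm u) (norm_nonneg _) zero_le_one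
    _ ≤ ‖S‖ := by nlinarith [norm_nonneg S, norm_nonneg u]

/-- Rosenthal's disjointification lemma (finite-sum form, point masses). -/
lemma rosenthal_comb (g : ℕ → ℕ → ℝ) (ε : ℝ) (hε : 0 < ε) :
    ∀ (k : ℕ) (I : Set ℕ), I.Infinite →
    (∀ n ∈ I, ∀ F : Finset ℕ, ↑F ⊆ I \ {n} → ∑ m ∈ F, g n m ≤ k * ε) →
    ∃ M : Set ℕ, M.Infinite ∧ M ⊆ I ∧
      ∀ n ∈ M, ∀ F : Finset ℕ, ↑F ⊆ M \ {n} → ∑ m ∈ F, g n m ≤ ε := by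
  intro k
  induction k with
  | zero =>
    intro I hI hyp
    exact ⟨I, hI, subset_rfl, fun n hn F hF => le_trans (by simpa using hyp n hn F hF) hε.le⟩
  | succ k ih =>
    intro I hI hyp
    -- partition I into countably many infinite pieces
    let j : ℕ → ℕ := fun t => (Set.Infinite.natEmbedding I hI t : ℕ)
    have hj : Function.Injective j := fun a b h =>
      (Set.Infinite.natEmbedding I hI).injective (Subtype.ext h)
    have hjI : ∀ t, j t ∈ I := fun t => (Set.Infinite.natEmbedding I hI t).2
    let q : ℕ → ℕ → ℕ := fun i t => j (Nat.pair i t)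
    have hq : ∀ i t i' t', q i t = q i' t' → i = i' ∧ t = t' := by
      intro i t i' t' h
      have := hj h
      have h2 := congrArg Nat.unpair this
      simp [Nat.unpair_pair] at h2
      exact ⟨h2.1, h2.2⟩
    let B : ℕ → Set ℕ := fun i => Set.range (q i)
    have hBI : ∀ i, B i ⊆ I := by rintro i x ⟨t, rfl⟩; exact hjI _
    have hBinf : ∀ i, (B i).Infinite :=
      fun i => Set.infinite_range_of_injective (fun a b h => (hq i a i b h).2)
    have hBdisj : ∀ i i', i ≠ i' → ∀ x, x ∈ B i → x ∈ B i' → False := by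
      rintro i i' hne x ⟨t, rfl⟩ ⟨t', ht'⟩
      exact hne ((hq i' t' i t ht').1).symm
    by_cases hcase : ∃ i, ∀ n ∈ B i, ∀ F : Finset ℕ, ↑F ⊆ B i \ {n} → ∑ m ∈ F, g n m ≤ ε
    · obtain ⟨i, hi⟩ := hcase
      exact ⟨B i, hBinf i, hBI i, hi⟩
    · push_neg at hcase
      choose nn hnnB FF hFF hFFbig using hcase
      have hnninj : Function.Injective nn := by
        intro i i' h
        by_contra hne
        exact hBdisj i i' hne (nn i) (hnnB i) (h ▸ hnnB i')
      set I' : Set ℕ := Set.range nn with hI'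
      have hI'inf : I'.Infinite := Set.infinite_range_of_injective hnninj
      have hI'I : I' ⊆ I := by rintro x ⟨i, rfl⟩; exact hBI i (hnnB i)
      have hyp' : ∀ n ∈ I', ∀ F : Finset ℕ, ↑F ⊆ I' \ {n} → ∑ m ∈ F, g n m ≤ k * ε := by
        rintro n ⟨i, rfl⟩ F hF
        have hdisj : Disjoint F (FF i) := by
          rw [Finset.disjoint_left]
          intro x hxF hxFF
          have hxI' : x ∈ I' \ {nn i} := hF hxF
          obtain ⟨i', rfl⟩ := hxI'.1
          have hne : nn i' ≠ nn i := hxI'.2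
          have hi'ne : i' ≠ i := fun h => hne (by rw [h])
          have hxB : (nn i' : ℕ) ∈ B i \ {nn i} := hFF i hxFF
          exact hBdisj i' i hi'ne (nn i') (hnnB i') hxB.1
        have hunion : ↑(F ∪ FF i) ⊆ I \ {nn i} := by
          intro x hx
          rcases Finset.mem_union.mp (by exact_mod_cast hx) with h | h
          · exact ⟨hI'I (hF h).1, (hF h).2⟩
          · exact ⟨hBI i (hFF i h).1, (hFF i h).2⟩
        have h1 := hyp (nn i) (hI'I ⟨i, rfl⟩) (F ∪ FF i) hunion
        rw [Finset.sum_union hdisj] at h1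
        have h2 := hFFbig i
        push_cast at h1 ⊢
        linarith
      obtain ⟨M, hM1, hM2, hM3⟩ := ih I' hI'inf hyp'
      exact ⟨M, hM1, hM2.trans hI'I, hM3⟩

/-- **Rosenthal's `c₀`-theorem.** If `S : c₀ → X` is a bounded linear
operator with `inf_n ‖S eₙ‖ > 0` (where `eₙ` are the unit vectors of `c₀ = C₀(ℕ,ℝ)`),
then there is an infinite set `N ⊆ ℕ` such that the restriction of `S` to the subspace of
sequences supported on `N` is an isomorphism onto its image.  (In particular this situation
is impossible when `X` contains no isomorphic copy of `c₀`.) -/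
theorem stmt15 {X : Type*} [NormedAddCommGroup X] [NormedSpace ℝ X] [CompleteSpace X]
    (S : C₀(ℕ, ℝ) →L[ℝ] X)
    (e : ℕ → C₀(ℕ, ℝ)) (he : ∀ n m : ℕ, e n m = if m = n then 1 else 0)
    (δ : ℝ) (hδ : 0 < δ) (hS : ∀ n, δ ≤ ‖S (e n)‖) :
    ∃ N : Set ℕ, N.Infinite ∧ ∃ c > 0, ∀ f : C₀(ℕ, ℝ),
      (∀ m ∉ N, f m = 0) → c * ‖f‖ ≤ ‖S f‖ := by
  classical
  -- norming functionals
  have hne : ∀ n, S (e n) ≠ 0 := by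
    intro n h
    have := hS n
    rw [h, norm_zero] at this
    linarith
  have hφ : ∀ n, ∃ φ : StrongDual ℝ X, ‖φ‖ = 1 ∧ φ (S (e n)) = ‖S (e n)‖ := by
    intro n
    obtain ⟨φ, h1, h2⟩ := exists_dual_vector ℝ (S (e n)) (norm_ne_zero_iff.mpr (hne n))
    exact ⟨φ, h1, by exact_mod_cast h2⟩
  choose φ hφ1 hφ2 using hφ
  set g : ℕ → ℕ → ℝ := fun n m => |φ n (S (e m))| with hg
  have hg0 : ∀ n m, 0 ≤ g n m := fun n m => abs_nonneg _
  have hC : ∀ n, ∀ F : Finset ℕ, ∑ m ∈ F, g n m ≤ ‖S‖ :=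
    fun n F => wuc S e he (φ n) (hφ1 n).le F
  -- apply the disjointification lemma with ε = δ/2
  obtain ⟨k, hk⟩ := exists_nat_ge (‖S‖ / (δ / 2))
  have hkS : ‖S‖ ≤ (k : ℝ) * (δ / 2) := by
    rw [div_le_iff₀ (by linarith)] at hk
    linarith
  obtain ⟨M, hMinf, -, hMsmall⟩ := rosenthal_comb g (δ / 2) (by linarith) k Set.univ
    Set.infinite_univ (fun n _ F _ => (hC n F).trans hkS)
  refine ⟨M, hMinf, δ / 2, by linarith, ?_⟩
  -- the key estimate for finitely supported vectors
  have lower : ∀ F : Finset ℕ, ↑F ⊆ M → ∀ a : ℕ → ℝ,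
      δ / 2 * ‖∑ m ∈ F, a m • e m‖ ≤ ‖S (∑ m ∈ F, a m • e m)‖ := by
    intro F hFM a
    set u : C₀(ℕ, ℝ) := ∑ m ∈ F, a m • e m with hu
    by_cases hu0 : ‖u‖ = 0
    · rw [hu0, mul_zero]; exact norm_nonneg _
    have hFne : F.Nonempty := by
      rcases Finset.eq_empty_or_nonempty F with h | h
      · exfalso; apply hu0; rw [hu, h, Finset.sum_empty, norm_zero]
      · exact h
    obtain ⟨n, hnF, hmax⟩ := F.exists_max_image (fun m => |a m|) hFne
    have hA : ‖u‖ ≤ |a n| := by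
      apply c0_norm_le _ (abs_nonneg _)
      intro kk
      rw [hu, comb_apply e he]
      by_cases h : kk ∈ F
      · rw [if_pos h]; exact hmax kk h
      · rw [if_neg h]; simp [abs_nonneg]
    have hnM : n ∈ M := hFM hnF
    have hsum : φ n (S u) = a n * φ n (S (e n)) + ∑ m ∈ F.erase n, a m * φ n (S (e m)) := by
      rw [hu, map_sum, map_sum]
      rw [← Finset.add_sum_erase F _ hnF]
      congr 1
      · rw [map_smul, map_smul]; simp
      · apply Finset.sum_congr rfl
        intro m _
        rw [map_smul, map_smul]; simp
    have hrest : |∑ m ∈ F.erase n, a m * φ n (S (e m))| ≤ |a n| * (δ / 2) := by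
      calc |∑ m ∈ F.erase n, a m * φ n (S (e m))|
          ≤ ∑ m ∈ F.erase n, |a m * φ n (S (e m))| := Finset.abs_sum_le_sum_abs _ _
        _ = ∑ m ∈ F.erase n, |a m| * g n m := by
            apply Finset.sum_congr rfl; intro m _; rw [abs_mul]
        _ ≤ ∑ m ∈ F.erase n, |a n| * g n m := by
            apply Finset.sum_le_sum
            intro m hm
            exact mul_le_mul_of_nonneg_right (hmax m (Finset.mem_of_mem_erase hm)) (hg0 n m)
        _ = |a n| * ∑ m ∈ F.erase n, g n m := by rw [Finset.mul_sum]
        _ ≤ |a n| * (δ / 2) := by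
            apply mul_le_mul_of_nonneg_left _ (abs_nonneg _)
            apply hMsmall n hnM
            intro x hx
            have hx' := Finset.mem_coe.mp hx
            exact ⟨hFM (Finset.mem_of_mem_erase hx'), Finset.ne_of_mem_erase hx'⟩
    have hmain : |a n| * δ ≤ |a n * φ n (S (e n))| := by
      rw [abs_mul, hφ2 n, abs_of_nonneg (norm_nonneg _)]
      exact mul_le_mul_of_nonneg_left (hS n) (abs_nonneg _)
    have htri : |a n * φ n (S (e n))| ≤ |φ n (S u)| + |∑ m ∈ F.erase n, a m * φ n (S (e m))| := by
      have hh : a n * φ n (S (e n)) = φ n (S u) - ∑ m ∈ F.erase n, a m * φ n (S (e m)) := by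
        rw [hsum]; ring
      rw [hh, sub_eq_add_neg]
      exact (abs_add_le _ _).trans (by rw [abs_neg])
    have hup : |φ n (S u)| ≤ ‖S u‖ := by
      have := (φ n).le_opNorm (S u)
      rw [hφ1 n, one_mul] at this
      simpa [Real.norm_eq_abs] using this
    nlinarith [abs_nonneg (a n)]
  -- extend to all f supported on M by truncation
  intro f hf
  refine le_of_forall_pos_le_add ?_
  intro η hη
  have hd : (0:ℝ) < ‖S‖ + δ / 2 + 1 := by positivity
  set η' : ℝ := η / (‖S‖ + δ / 2 + 1) with hη'
  have hη'pos : 0 < η' := div_pos hη hd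
  obtain ⟨N₀, hN₀⟩ := c0_tail f hη'pos
  set F : Finset ℕ := (Finset.range N₀).filter (fun m => m ∈ M) with hF
  have hFM : ↑F ⊆ M := by
    intro x hx
    exact (Finset.mem_filter.mp (Finset.mem_coe.mp hx)).2
  set t : C₀(ℕ, ℝ) := ∑ m ∈ F, f m • e m with ht
  have hdiff : ‖f - t‖ ≤ η' := by
    apply c0_norm_le _ hη'pos.le
    intro kk
    have : (f - t) kk = f kk - t kk := by rw [ZeroAtInftyContinuousMap.coe_sub]; rfl
    rw [this, ht, comb_apply e he]
    by_cases h : kk ∈ F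
    · rw [if_pos h]; simpa using hη'pos.le
    · rw [if_neg h, sub_zero]
      by_cases hM : kk ∈ M
      · have : ¬ kk < N₀ := fun hlt => h (Finset.mem_filter.mpr ⟨Finset.mem_range.mpr hlt, hM⟩)
        exact (hN₀ kk (not_lt.mp this)).le
      · rw [hf kk hM]; simpa using hη'pos.le
  have hlow := lower F hFM (fun m => f m)
  rw [← ht] at hlow
  have h1 : ‖f‖ ≤ ‖t‖ + η' := by
    calc ‖f‖ = ‖t + (f - t)‖ := by rw [show t + (f - t) = f by abel]
      _ ≤ ‖t‖ + ‖f - t‖ := norm_add_le _ _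
      _ ≤ ‖t‖ + η' := by linarith
  have h2 : ‖S t‖ ≤ ‖S f‖ + ‖S‖ * η' := by
    calc ‖S t‖ = ‖S f + S (t - f)‖ := by rw [← map_add, show f + (t - f) = t by abel]
      _ ≤ ‖S f‖ + ‖S (t - f)‖ := norm_add_le _ _
      _ ≤ ‖S f‖ + ‖S‖ * ‖t - f‖ := by linarith [S.le_opNorm (t - f)]
      _ ≤ ‖S f‖ + ‖S‖ * η' := by
          have : ‖t - f‖ = ‖f - t‖ := norm_sub_rev _ _
          nlinarith [norm_nonneg S]
  have hη'bound : (‖S‖ + δ / 2) * η' ≤ η := by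
    rw [hη']
    calc (‖S‖ + δ / 2) * (η / (‖S‖ + δ / 2 + 1)) ≤ (‖S‖ + δ / 2 + 1) * (η / (‖S‖ + δ / 2 + 1)) := by
          apply mul_le_mul_of_nonneg_right (by linarith) (by positivity)
      _ = η := by field_simp
  nlinarith [norm_nonneg (S : C₀(ℕ, ℝ) →L[ℝ] X), norm_nonneg t]
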